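/- Let G = (V,E) be a connected finite simple graph containing no cycle of length 4, no cycle of length 5, and no cycle of length 6 (as subgraphs, not necessarily induced), with L(G) = ∅. Then every weight function w : V → ℝ for which G is w-well-covered is constant, i.e., there exists k ∈ ℝ such that w(v) = k for all v ∈ V. -/

import Mathlib

namespace WC

variable {V : Type*}

/-- A set of vertices is independent if its elements are pairwise nonadjacent. -/
def IsIndep (G : SimpleGraph V) (S : Set V) : Prop :=
  S.Pairwise fun a b => ¬ G.Adj a b

/-- A maximal independent set: independent and not properly contained in another
independent set. -/
def IsMaxIndep (G : SimpleGraph V) (S : Set V) : Prop :=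
  IsIndep G S ∧ ∀ T : Set V, IsIndep G T → S ⊆ T → T = S

/-- A maximal independent set of the subgraph of `G` induced by `A`
(equivalently, a subset of `A`, independent in `G`, maximal among such). -/
def IsMaxIndepOn (G : SimpleGraph V) (A S : Set V) : Prop :=
  S ⊆ A ∧ IsIndep G S ∧ ∀ T : Set V, T ⊆ A → IsIndep G T → S ⊆ T → T = S

/-- The weight of a set of vertices: `w(S) = Σ_{s ∈ S} w(s)`. -/
noncomputable def wsum (w : V → ℝ) (S : Set V) : ℝ := ∑ᶠ x ∈ S, w x

/-- `G` is `w`-well-covered if all maximal independent sets have the same weight. -/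
def WWC (G : SimpleGraph V) (w : V → ℝ) : Prop :=
  ∀ S T : Set V, IsMaxIndep G S → IsMaxIndep G T → wsum w S = wsum w T

/-- `G` is well-covered if all maximal independent sets have the same cardinality. -/
def WellCovered (G : SimpleGraph V) : Prop :=
  ∀ S T : Set V, IsMaxIndep G S → IsMaxIndep G T → S.ncard = T.ncard

/-- `N(S)`, the set of vertices at distance exactly 1 from `S`. -/
def nbhd (G : SimpleGraph V) (S : Set V) : Set V :=
  {x | x ∉ S ∧ ∃ s ∈ S, G.Adj x s}

/-- `N[S]`, the set of vertices at distance at most 1 from `S`. -/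
def cnbhd (G : SimpleGraph V) (S : Set V) : Set V :=
  S ∪ {x | ∃ s ∈ S, G.Adj x s}

/-- `N₂(S)`, the set of vertices at distance exactly 2 from `S`. -/
def n2 (G : SimpleGraph V) (S : Set V) : Set V :=
  {x | x ∉ cnbhd G S ∧ ∃ y ∈ nbhd G S, G.Adj x y}

/-- `S` dominates `T` if `T ⊆ N[S]`. -/
def Dominates (G : SimpleGraph V) (S T : Set V) : Prop := T ⊆ cnbhd G S

/-- `D(v) = N(v) \ N(N₂(v))`. -/
def dSet (G : SimpleGraph V) (v : V) : Set V :=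
  G.neighborSet v \ nbhd G (n2 G {v})

/-- `L(G)`: vertices of degree 1, or of degree 2 lying on a triangle. -/
def lSet (G : SimpleGraph V) : Set V :=
  {v | (G.neighborSet v).ncard = 1 ∨
    ((G.neighborSet v).ncard = 2 ∧ ∃ a b, G.Adj v a ∧ G.Adj v b ∧ G.Adj a b)}

/-- `G` contains a cycle of length `k` as a (not necessarily induced) subgraph. -/
def HasCycleLen (G : SimpleGraph V) (k : ℕ) : Prop :=
  ∃ (u : V) (p : G.Walk u u), p.IsCycle ∧ p.length = k

/-- A vertex is simplicial if its closed neighborhood induces a complete subgraph. -/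
def Simplicial (G : SimpleGraph V) (v : V) : Prop :=
  ∀ a ∈ G.neighborSet v, ∀ b ∈ G.neighborSet v, a ≠ b → G.Adj a b

/-- `B` is an induced complete bipartite subgraph of `G` on (nonempty, disjoint)
parts `BX` and `BY`. -/
def IsCompleteBipartiteOn (G : SimpleGraph V) (BX BY : Set V) : Prop :=
  BX.Nonempty ∧ BY.Nonempty ∧ Disjoint BX BY ∧ IsIndep G BX ∧ IsIndep G BY ∧
    ∀ x ∈ BX, ∀ y ∈ BY, G.Adj x y

/-- `B` (on parts `BX`, `BY`) is a generating subgraph of `G`: there is an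
independent set `S` (a witness) such that `S ∪ BX` and `S ∪ BY` are both
maximal independent sets of `G`. -/
def IsGenerating (G : SimpleGraph V) (BX BY : Set V) : Prop :=
  ∃ S : Set V, IsIndep G S ∧ IsMaxIndep G (S ∪ BX) ∧ IsMaxIndep G (S ∪ BY)

/-- The edge `xy` is relating: there is an independent set `S` such that
`S ∪ {x}` and `S ∪ {y}` are both maximal independent sets of `G`. -/
def IsRelating (G : SimpleGraph V) (x y : V) : Prop :=
  G.Adj x y ∧ ∃ S : Set V, IsIndep G S ∧ IsMaxIndep G (S ∪ {x}) ∧ IsMaxIndep G (S ∪ {y})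

end WC

open WC

section Aux

variable {V : Type*}

lemma cyc4 {G : SimpleGraph V} {a b c d : V}
    (h1 : G.Adj a b) (h2 : G.Adj b c) (h3 : G.Adj c d) (h4 : G.Adj d a)
    (hac : a ≠ c) (hbd : b ≠ d) : HasCycleLen G 4 := by
  refine ⟨a, .cons h1 (.cons h2 (.cons h3 (.cons h4 .nil))), ?_, rfl⟩
  have hab := h1.ne; have hbc := h2.ne; have hcd := h3.ne; have hda := h4.ne
  simp only [SimpleGraph.Walk.isCycle_def, SimpleGraph.Walk.isTrail_def,
    SimpleGraph.Walk.edges_cons, SimpleGraph.Walk.edges_nil,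
    SimpleGraph.Walk.support_cons, SimpleGraph.Walk.support_nil,
    List.tail_cons, List.nodup_cons, List.mem_cons, List.not_mem_nil,
    List.nodup_nil, Sym2.eq_iff, ne_eq]
  refine ⟨⟨?_, ?_, ?_, ?_⟩, by simp, ?_⟩ <;> aesop

lemma cyc5 {G : SimpleGraph V} {a b c d e : V}
    (h1 : G.Adj a b) (h2 : G.Adj b c) (h3 : G.Adj c d) (h4 : G.Adj d e) (h5 : G.Adj e a)
    (hac : a ≠ c) (had : a ≠ d) (hbd : b ≠ d) (hbe : b ≠ e) (hce : c ≠ e) :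
    HasCycleLen G 5 := by
  refine ⟨a, .cons h1 (.cons h2 (.cons h3 (.cons h4 (.cons h5 .nil)))), ?_, rfl⟩
  have hab := h1.ne; have hbc := h2.ne; have hcd := h3.ne; have hde := h4.ne
  have hea := h5.ne
  simp only [SimpleGraph.Walk.isCycle_def, SimpleGraph.Walk.isTrail_def,
    SimpleGraph.Walk.edges_cons, SimpleGraph.Walk.edges_nil,
    SimpleGraph.Walk.support_cons, SimpleGraph.Walk.support_nil,
    List.tail_cons, List.nodup_cons, List.mem_cons, List.not_mem_nil,
    List.nodup_nil, Sym2.eq_iff, ne_eq]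
  refine ⟨⟨?_, ?_, ?_, ?_, ?_⟩, by simp, ?_⟩ <;> aesop

lemma cyc6 {G : SimpleGraph V} {a b c d e f : V}
    (h1 : G.Adj a b) (h2 : G.Adj b c) (h3 : G.Adj c d) (h4 : G.Adj d e) (h5 : G.Adj e f)
    (h6 : G.Adj f a)
    (hac : a ≠ c) (had : a ≠ d) (hae : a ≠ e) (hbd : b ≠ d) (hbe : b ≠ e) (hbf : b ≠ f)
    (hce : c ≠ e) (hcf : c ≠ f) (hdf : d ≠ f) :
    HasCycleLen G 6 := by
  refine ⟨a, .cons h1 (.cons h2 (.cons h3 (.cons h4 (.cons h5 (.cons h6 .nil))))), ?_, rfl⟩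
  have hab := h1.ne; have hbc := h2.ne; have hcd := h3.ne; have hde := h4.ne
  have hef := h5.ne; have hfa := h6.ne
  simp only [SimpleGraph.Walk.isCycle_def, SimpleGraph.Walk.isTrail_def,
    SimpleGraph.Walk.edges_cons, SimpleGraph.Walk.edges_nil,
    SimpleGraph.Walk.support_cons, SimpleGraph.Walk.support_nil,
    List.tail_cons, List.nodup_cons, List.mem_cons, List.not_mem_nil,
    List.nodup_nil, Sym2.eq_iff, ne_eq]
  refine ⟨⟨?_, ?_, ?_, ?_, ?_, ?_⟩, by simp, ?_⟩ <;> aesop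

lemma indep_insert {G : SimpleGraph V} {S : Set V} {x : V}
    (hS : IsIndep G S) (hx : ∀ s ∈ S, ¬ G.Adj x s) : IsIndep G (insert x S) := by
  have : Std.Symm (fun a b => ¬ G.Adj a b) := ⟨fun a b h hba => h hba.symm⟩
  exact Set.pairwise_insert_of_symm.2 ⟨hS, fun b hb _ => hx b hb⟩

lemma exists_maxIndepOn [Finite V] (G : SimpleGraph V) {A S0 : Set V}
    (h0 : S0 ⊆ A) (hi : IsIndep G S0) :
    ∃ S : Set V, S0 ⊆ S ∧ IsMaxIndepOn G A S := by
  classical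
  set F : Set (Set V) := {S | S0 ⊆ S ∧ S ⊆ A ∧ IsIndep G S} with hF
  obtain ⟨S, hSF, hmax⟩ := Set.Finite.exists_maximalFor Set.ncard F (Set.toFinite F)
    ⟨S0, subset_rfl, h0, hi⟩
  refine ⟨S, hSF.1, hSF.2.1, hSF.2.2, ?_⟩
  intro T hTA hTi hST
  have hTF : T ∈ F := ⟨hSF.1.trans hST, hTA, hTi⟩
  have hcard : S.ncard = T.ncard := le_antisymm (Set.ncard_le_ncard hST (Set.toFinite T))
    (hmax hTF (Set.ncard_le_ncard hST (Set.toFinite T)))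
  exact (Set.eq_of_subset_of_ncard_le hST hcard.ge (Set.toFinite T)).symm

lemma maxIndepOn_dom {G : SimpleGraph V} {A S : Set V} (h : IsMaxIndepOn G A S)
    {u : V} (huA : u ∈ A) (huS : u ∉ S) : ∃ s ∈ S, G.Adj u s := by
  by_contra hc; push_neg at hc
  have hins : IsIndep G (insert u S) := indep_insert h.2.1 hc
  have hsub : insert u S ⊆ A := Set.insert_subset huA h.1
  have heq := h.2.2 _ hsub hins (Set.subset_insert u S)
  exact huS (heq ▸ Set.mem_insert u S)

lemma isMaxIndep_of_dom {G : SimpleGraph V} {S : Set V} (hi : IsIndep G S)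
    (hd : ∀ u, u ∉ S → ∃ s ∈ S, G.Adj u s) : IsMaxIndep G S := by
  refine ⟨hi, fun T hT hST => ?_⟩
  by_contra hne
  obtain ⟨u, huT, huS⟩ : ∃ u, u ∈ T ∧ u ∉ S := by
    by_contra h; push_neg at h
    exact hne (Set.Subset.antisymm (fun t ht => h t ht) hST)
  obtain ⟨s, hsS, hadj⟩ := hd u huS
  exact hT huT (hST hsS) (fun h => huS (h ▸ hsS)) hadj

lemma wsum_union_singleton [Finite V] (w : V → ℝ) {S : Set V} {x : V} (hx : x ∉ S) :
    wsum w (S ∪ {x}) = wsum w S + w x := by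
  unfold wsum
  rw [finsum_mem_union (by simpa using hx) (Set.toFinite S) (Set.toFinite {x}),
    finsum_mem_singleton]

lemma relating_eq [Finite V] {G : SimpleGraph V} {w : V → ℝ} (hw : WWC G w)
    {x y : V} {S : Set V} (hx : x ∉ S) (hy : y ∉ S)
    (hMx : IsMaxIndep G (S ∪ {x})) (hMy : IsMaxIndep G (S ∪ {y})) : w x = w y := by
  have h := hw _ _ hMx hMy
  rw [wsum_union_singleton w hx, wsum_union_singleton w hy] at h
  linarith

lemma exists_outside_nbr [Fintype V] {G : SimpleGraph V}
    (h4 : ¬ HasCycleLen G 4) (hL : lSet G = ∅) {x y v : V} (hxy : G.Adj x y)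
    (hxv : G.Adj x v) (hyv : ¬ G.Adj y v) (hvy : v ≠ y) :
    ∃ z, G.Adj v z ∧ ¬ G.Adj x z ∧ ¬ G.Adj y z ∧ z ≠ x ∧ z ≠ y := by
  by_contra hc
  push_neg at hc
  have key : ∀ z, G.Adj v z → z = x ∨ G.Adj x z := by
    intro z hvz
    by_contra hcz; push_neg at hcz
    obtain ⟨hzx, hxz⟩ := hcz
    by_cases hyz : G.Adj y z
    · exact h4 (cyc4 hxv hvz hyz.symm hxy.symm (Ne.symm hzx) hvy)
    · exact hyv ((hc z hvz hxz hyz hzx ▸ hvz).symm)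
  have sub : (G.neighborSet v \ {x}).Subsingleton := by
    intro z1 h1 z2 h2
    by_contra hne
    have hvz1 : G.Adj v z1 := h1.1
    have hvz2 : G.Adj v z2 := h2.1
    have hxz1 : G.Adj x z1 := (key z1 hvz1).resolve_left h1.2
    have hxz2 : G.Adj x z2 := (key z2 hvz2).resolve_left h2.2
    exact h4 (cyc4 hvz1 hxz1.symm hxz2 hvz2.symm hxv.ne' hne)
  have hvL : v ∈ lSet G := by
    rcases sub.eq_empty_or_singleton with hemp | ⟨u, hu⟩
    · have hN : G.neighborSet v = {x} := by
        ext z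
        constructor
        · intro hz
          by_contra hzx
          exact absurd (hemp ▸ (Set.mem_diff z).2 ⟨hz, hzx⟩) (Set.notMem_empty z)
        · rintro rfl; exact hxv.symm
      exact Or.inl (by rw [hN]; exact Set.ncard_singleton x)
    · have huv : u ∈ G.neighborSet v \ {x} := hu ▸ rfl
      have hvu : G.Adj v u := huv.1
      have hux : u ≠ x := huv.2
      have hxu : G.Adj x u := (key u hvu).resolve_left hux
      have hN : G.neighborSet v = {x, u} := by
        ext z
        constructor
        · intro hz
          by_cases hzx : z = x
          · exact Or.inl hzx
          · have : z ∈ ({u} : Set V) := hu ▸ (Set.mem_diff z).2 ⟨hz, hzx⟩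
            exact Or.inr this
        · rintro (rfl | rfl)
          · exact hxv.symm
          · exact hvu
      refine Or.inr ⟨by rw [hN]; exact Set.ncard_pair (Ne.symm hux), x, u, hxv.symm, hvu, hxu⟩
  rw [hL] at hvL
  exact hvL

lemma no_edge_B1 {G : SimpleGraph V} (h5 : ¬ HasCycleLen G 5) {x v v' z z' : V}
    (hxv : G.Adj x v) (hxv' : G.Adj x v') (hvv' : v ≠ v')
    (hvz : G.Adj v z) (hv'z' : G.Adj v' z') (hxz : ¬ G.Adj x z) (hxz' : ¬ G.Adj x z')
    (hzx : z ≠ x) (hz'x : z' ≠ x) : ¬ G.Adj z z' := by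
  intro hzz'
  have hvz'2 : v ≠ z' := fun h => hxz' (h ▸ hxv)
  have hv'z2 : v' ≠ z := fun h => hxz (h ▸ hxv')
  exact h5 (cyc5 hxv hvz hzz' hv'z'.symm hxv'.symm (Ne.symm hzx) (Ne.symm hz'x)
    hvz'2 hvv' (Ne.symm hv'z2))

lemma no_edge_B2 {G : SimpleGraph V} (h6 : ¬ HasCycleLen G 6) {x y v v' z z' : V}
    (hxy : G.Adj x y) (hxv : G.Adj x v) (hyv : ¬ G.Adj y v) (hvy : v ≠ y)
    (hyv' : G.Adj y v') (hxv' : ¬ G.Adj x v') (hv'x : v' ≠ x)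
    (hvz : G.Adj v z) (hv'z' : G.Adj v' z')
    (hz : ¬ G.Adj x z ∧ ¬ G.Adj y z ∧ z ≠ x ∧ z ≠ y)
    (hz' : ¬ G.Adj x z' ∧ ¬ G.Adj y z' ∧ z' ≠ x ∧ z' ≠ y) : ¬ G.Adj z z' := by
  intro hzz'
  refine h6 (cyc6 hxy.symm hxv hvz hzz' hv'z'.symm hyv'.symm
    (Ne.symm hvy) (Ne.symm hz.2.2.2) (Ne.symm hz'.2.2.2)
    (Ne.symm hz.2.2.1) (Ne.symm hz'.2.2.1) (Ne.symm hv'x)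
    (fun h => hz'.1 (h ▸ hxv)) (fun h => hxv' (h ▸ hxv))
    (fun h => hz.2.1 (by rw [h]; exact hyv')))

lemma edge_relating [Fintype V] {G : SimpleGraph V}
    (h4 : ¬ HasCycleLen G 4) (h5 : ¬ HasCycleLen G 5) (h6 : ¬ HasCycleLen G 6)
    (hL : lSet G = ∅) {x y : V} (hxy : G.Adj x y) :
    ∃ S : Set V, x ∉ S ∧ y ∉ S ∧ IsMaxIndep G (S ∪ {x}) ∧ IsMaxIndep G (S ∪ {y}) := by
  classical
  set V' : Set V := {z | ¬ G.Adj x z ∧ ¬ G.Adj y z ∧ z ≠ x ∧ z ≠ y} with hV'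
  set T : Set V := {v | (G.Adj x v ∧ ¬ G.Adj y v ∧ v ≠ y) ∨
    (G.Adj y v ∧ ¬ G.Adj x v ∧ v ≠ x)} with hTdef
  have hstep : ∀ v ∈ T, ∃ z, G.Adj v z ∧ z ∈ V' := by
    intro v hv
    rcases hv with ⟨hxv, hyv, hvy⟩ | ⟨hyv, hxv, hvx⟩
    · obtain ⟨z, hz⟩ := exists_outside_nbr h4 hL hxy hxv hyv hvy
      exact ⟨z, hz.1, hz.2⟩
    · obtain ⟨z, hz⟩ := exists_outside_nbr h4 hL hxy.symm hyv hxv hvx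
      exact ⟨z, hz.1, hz.2.2.1, hz.2.1, hz.2.2.2.2, hz.2.2.2.1⟩
  have hstep' : ∀ v, ∃ z, v ∈ T → (G.Adj v z ∧ z ∈ V') := by
    intro v
    by_cases hv : v ∈ T
    · obtain ⟨z, hz⟩ := hstep v hv; exact ⟨z, fun _ => hz⟩
    · exact ⟨x, fun h => absurd h hv⟩
  choose f hf using hstep'
  set S0 : Set V := f '' T with hS0
  have hS0V' : S0 ⊆ V' := by rintro _ ⟨v, hv, rfl⟩; exact (hf v hv).2
  have hS0ind : IsIndep G S0 := by
    rintro _ ⟨v, hv, rfl⟩ _ ⟨v', hv', rfl⟩ hne hadj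
    have hvv' : v ≠ v' := fun h => hne (by rw [h])
    obtain ⟨hvz, hzV'⟩ := hf v hv
    obtain ⟨hv'z, hz'V'⟩ := hf v' hv'
    rcases hv with ⟨hxv, hyv, hvy⟩ | ⟨hyv, hxv, hvx⟩ <;>
      rcases hv' with ⟨hxv', hyv', hv'y⟩ | ⟨hyv', hxv', hv'x⟩
    · exact no_edge_B1 h5 hxv hxv' hvv' hvz hv'z hzV'.1 hz'V'.1 hzV'.2.2.1 hz'V'.2.2.1 hadj
    · exact no_edge_B2 h6 hxy hxv hyv hvy hyv' hxv' hv'x hvz hv'z hzV' hz'V' hadj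
    · exact (no_edge_B2 h6 hxy hxv' hyv' hv'y hyv hxv hvx hv'z hvz hz'V' hzV') hadj.symm
    · exact no_edge_B1 h5 hyv hyv' hvv' hvz hv'z hzV'.2.1 hz'V'.2.1 hzV'.2.2.2 hz'V'.2.2.2 hadj
  obtain ⟨S, hS0S, hSon⟩ := exists_maxIndepOn G hS0V' hS0ind
  obtain ⟨hSA, hSind, hSmax⟩ := hSon
  have hxS : x ∉ S := fun h => (hSA h).2.2.1 rfl
  have hyS : y ∉ S := fun h => (hSA h).2.2.2 rfl
  have hSnx : ∀ s ∈ S, ¬ G.Adj x s := fun s hs => (hSA hs).1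
  have hSny : ∀ s ∈ S, ¬ G.Adj y s := fun s hs => (hSA hs).2.1
  have hdomT : ∀ v ∈ T, ∃ s ∈ S, G.Adj v s :=
    fun v hv => ⟨f v, hS0S ⟨v, hv, rfl⟩, (hf v hv).1⟩
  have hMx : IsMaxIndep G (S ∪ {x}) := by
    rw [Set.union_singleton]
    refine isMaxIndep_of_dom (indep_insert hSind hSnx) ?_
    intro u hu
    simp only [Set.mem_insert_iff, not_or] at hu
    obtain ⟨hux, huS⟩ := hu
    by_cases hxu : G.Adj x u
    · exact ⟨x, Set.mem_insert x S, hxu.symm⟩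
    by_cases huy : u = y
    · exact ⟨x, Set.mem_insert x S, by rw [huy]; exact hxy.symm⟩
    by_cases hyu : G.Adj y u
    · obtain ⟨s, hs, hadj⟩ := hdomT u (Or.inr ⟨hyu, hxu, hux⟩)
      exact ⟨s, Set.mem_insert_of_mem x hs, hadj⟩
    · obtain ⟨s, hs, hadj⟩ := maxIndepOn_dom ⟨hSA, hSind, hSmax⟩
        (show u ∈ V' from ⟨hxu, hyu, hux, huy⟩) huS
      exact ⟨s, Set.mem_insert_of_mem x hs, hadj⟩
  have hMy : IsMaxIndep G (S ∪ {y}) := by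
    rw [Set.union_singleton]
    refine isMaxIndep_of_dom (indep_insert hSind hSny) ?_
    intro u hu
    simp only [Set.mem_insert_iff, not_or] at hu
    obtain ⟨huy, huS⟩ := hu
    by_cases hyu : G.Adj y u
    · exact ⟨y, Set.mem_insert y S, hyu.symm⟩
    by_cases hux : u = x
    · exact ⟨y, Set.mem_insert y S, by rw [hux]; exact hxy⟩
    by_cases hxu : G.Adj x u
    · obtain ⟨s, hs, hadj⟩ := hdomT u (Or.inl ⟨hxu, hyu, huy⟩)
      exact ⟨s, Set.mem_insert_of_mem y hs, hadj⟩
    · obtain ⟨s, hs, hadj⟩ := maxIndepOn_dom ⟨hSA, hSind, hSmax⟩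
        (show u ∈ V' from ⟨hxu, hyu, hux, huy⟩) huS
      exact ⟨s, Set.mem_insert_of_mem y hs, hadj⟩
  exact ⟨S, hxS, hyS, hMx, hMy⟩

end Aux

/-- in a connected graph with no `C₄`, `C₅`, `C₆` and `L(G) = ∅`,
every weight function `w` for which `G` is `w`-well-covered is constant. -/
theorem stmt_15 {V : Type*} [Fintype V] (G : SimpleGraph V) (hconn : G.Connected)
    (h4 : ¬ HasCycleLen G 4) (h5 : ¬ HasCycleLen G 5) (h6 : ¬ HasCycleLen G 6)
    (hL : lSet G = ∅) (w : V → ℝ) (hw : WWC G w) :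
    ∃ k : ℝ, ∀ v : V, w v = k := by
  have key : ∀ x y : V, G.Adj x y → w x = w y := by
    intro x y hxy
    obtain ⟨S, hxS, hyS, hMx, hMy⟩ := edge_relating h4 h5 h6 hL hxy
    exact relating_eq hw hxS hyS hMx hMy
  have hwalk : ∀ u v : V, G.Walk u v → w u = w v := by
    intro u v p
    induction p with
    | nil => rfl
    | cons h _ ih => exact (key _ _ h).trans ih
  have hne : Nonempty V := hconn.nonempty
  obtain ⟨v0⟩ := hne
  exact ⟨w v0, fun v => (hconn v v0).elim fun p => hwalk v v0 p⟩
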